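/- Let D_full be the full OofA design consisting of all m! permutations of {0,1,…,m−1}, and let M_full = X_fullᵀ X_full be the moment matrix of its PWO model matrix. Then tr(M_full²)/(m!)² = (2m³ + 3m² − 5m + 18)/18. -/
import Mathlib


/-- A run (addition order) on `m` components: position `r` receives component `x r`.
The position map `π_x` is `x.symm`. -/
abbrev Run (m : ℕ) := Equiv.Perm (Fin m)

/-- The PWO factor `z_ab(x)` as a real number. -/
def zab {m : ℕ} (x : Run m) (p : Fin m × Fin m) : ℝ :=
  if x.symm p.1 < x.symm p.2 then 1 else -1

/-- The PWO model matrix of a design: a row `(1, z_ab(x_i) : a < b)` for each run. -/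
def pwoX {m : ℕ} {ι : Type} (D : ι → Run m) :
    Matrix ι (Option {p : Fin m × Fin m // p.1 < p.2}) ℝ :=
  fun i c => match c with
    | none => 1
    | some p => zab (D i) p.1

open Finset

variable {m : ℕ}

lemma zab_mul_self (x : Run m) (p : Fin m × Fin m) : zab x p * zab x p = 1 := by
  unfold zab; split_ifs <;> norm_num

lemma zab_swap (x : Run m) {a b : Fin m} (h : a ≠ b) : zab x (b, a) = - zab x (a, b) := by
  unfold zab
  have hne : x.symm b ≠ x.symm a := fun he => h (x.symm.injective he).symm
  rcases lt_or_gt_of_ne hne with h'|h' <;> simp [h', not_lt.mpr h'.le, not_lt.mpr h'.le]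

lemma zab_diag (x : Run m) (a : Fin m) : zab x (a, a) = -1 := by
  unfold zab; simp

lemma sum_shift (t : Equiv.Perm (Fin m)) (f : Run m → ℝ) :
    ∑ σ : Run m, f (t * σ) = ∑ σ : Run m, f σ :=
  Fintype.sum_equiv (Equiv.mulLeft t) _ _ (fun σ => rfl)

lemma symm_mul (t σ : Run m) (c : Fin m) : (t * σ).symm c = σ.symm (t.symm c) := by
  simp [Equiv.Perm.mul_def, Equiv.symm_trans_apply]

lemma sum_zab_eq_zero {a b : Fin m} (h : a ≠ b) : ∑ σ : Run m, zab σ (a, b) = 0 := by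
  have key : ∀ σ : Run m, zab (Equiv.swap a b * σ) (a, b) = - zab σ (a, b) := by
    intro σ
    have h1 : (Equiv.swap a b * σ).symm a = σ.symm b := by
      rw [symm_mul]; simp
    have h2 : (Equiv.swap a b * σ).symm b = σ.symm a := by
      rw [symm_mul]; simp
    unfold zab
    simp only [h1, h2]
    have hne : σ.symm b ≠ σ.symm a := fun he => h (σ.symm.injective he).symm
    rcases lt_or_gt_of_ne hne with h'|h' <;> simp [h', not_lt.mpr h'.le, not_lt.mpr h'.le]
  have := sum_shift (Equiv.swap a b) (fun σ => zab σ (a, b))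
  simp only [key] at this
  simp only [Finset.sum_neg_distrib] at this
  linarith

/-- The covariance sum over the full design. -/
def S (m : ℕ) (a b c d : Fin m) : ℝ := ∑ σ : Run m, zab σ (a, b) * zab σ (c, d)

lemma S_self {a b : Fin m} : S m a b a b = (m.factorial : ℝ) := by
  unfold S
  simp only [zab_mul_self]
  simp [Fintype.card_perm]

lemma S_comm (a b c d : Fin m) : S m a b c d = S m c d a b := by
  unfold S; simp [mul_comm]

lemma S_swap_right (a b : Fin m) {c d : Fin m} (h : c ≠ d) : S m a b d c = - S m a b c d := by
  unfold S
  rw [← Finset.sum_neg_distrib]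
  exact Finset.sum_congr rfl fun σ _ => by rw [zab_swap σ h]; ring

lemma S_right_diag (c : Fin m) {a b : Fin m} (h : a ≠ b) : S m a b c c = 0 := by
  unfold S
  have : ∀ σ : Run m, zab σ (a,b) * zab σ (c,c) = - zab σ (a,b) := by
    intro σ; rw [zab_diag]; ring
  simp only [this, Finset.sum_neg_distrib, sum_zab_eq_zero h, neg_zero]

lemma S_antisymm_pair {a b : Fin m} (h : a ≠ b) : S m a b b a = -(m.factorial : ℝ) := by
  rw [S_swap_right _ _ h, S_self]

/-- key: disjoint pairs. -/
lemma S_disjoint {a b c d : Fin m} (hab : a ≠ b) (hca : c ≠ a) (hcb : c ≠ b)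
    (hda : d ≠ a) (hdb : d ≠ b) : S m a b c d = 0 := by
  have key : ∀ σ : Run m, zab (Equiv.swap a b * σ) (a, b) * zab (Equiv.swap a b * σ) (c, d)
      = - (zab σ (a, b) * zab σ (c, d)) := by
    intro σ
    have h1 : (Equiv.swap a b * σ).symm a = σ.symm b := by rw [symm_mul]; simp
    have h2 : (Equiv.swap a b * σ).symm b = σ.symm a := by rw [symm_mul]; simp
    have h3 : (Equiv.swap a b * σ).symm c = σ.symm c := by
      rw [symm_mul, Equiv.symm_swap, Equiv.swap_apply_of_ne_of_ne hca hcb]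
    have h4 : (Equiv.swap a b * σ).symm d = σ.symm d := by
      rw [symm_mul, Equiv.symm_swap, Equiv.swap_apply_of_ne_of_ne hda hdb]
    unfold zab
    simp only [h1, h2, h3, h4]
    have hne : σ.symm b ≠ σ.symm a := fun he => hab (σ.symm.injective he).symm
    rcases lt_or_gt_of_ne hne with h'|h' <;>
      simp [h', not_lt.mpr h'.le] <;> split_ifs <;> ring
  have := sum_shift (Equiv.swap a b) (fun σ => zab σ (a, b) * zab σ (c, d))
  simp only [key, Finset.sum_neg_distrib] at this
  have h0 : S m a b c d = - S m a b c d := by unfold S; linarith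
  linarith

lemma g3 (u v w : ℕ) (huv : u ≠ v) (huw : u ≠ w) (hvw : v ≠ w) :
    ((if u < v then (1:ℝ) else -1) * (if u < w then 1 else -1)) +
    ((if w < u then (1:ℝ) else -1) * (if w < v then 1 else -1)) +
    ((if v < w then (1:ℝ) else -1) * (if v < u then 1 else -1)) = 1 := by
  split_ifs <;> first | omega | norm_num

lemma zab_val (σ : Run m) (p : Fin m × Fin m) :
    zab σ p = if (σ.symm p.1).val < (σ.symm p.2).val then 1 else -1 := by
  unfold zab; simp only [Fin.lt_def]

lemma S_share {a b e : Fin m} (hab : a ≠ b) (hae : a ≠ e) (hbe : b ≠ e) :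
    S m a b a e = (m.factorial : ℝ) / 3 := by
  set t : Run m := Equiv.swap a b * Equiv.swap b e with ht
  set f : Run m → ℝ := fun σ => zab σ (a, b) * zab σ (a, e) with hf
  have hta : t.symm a = e := by
    rw [ht, symm_mul]; simp
  have htb : t.symm b = a := by
    rw [ht, symm_mul]
    simp only [Equiv.symm_swap, Equiv.swap_apply_right]
    exact Equiv.swap_apply_of_ne_of_ne hab hae
  have hte : t.symm e = b := by
    rw [ht, symm_mul]
    simp only [Equiv.symm_swap]
    rw [Equiv.swap_apply_of_ne_of_ne hae.symm hbe.symm, Equiv.swap_apply_right]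
  have key : ∀ σ : Run m, f σ + f (t * σ) + f (t * (t * σ)) = 1 := by
    intro σ
    have ha1 : (t * σ).symm a = σ.symm e := by rw [symm_mul, hta]
    have hb1 : (t * σ).symm b = σ.symm a := by rw [symm_mul, htb]
    have he1 : (t * σ).symm e = σ.symm b := by rw [symm_mul, hte]
    have ha2 : (t * (t * σ)).symm a = σ.symm b := by rw [symm_mul, hta, he1]
    have hb2 : (t * (t * σ)).symm b = σ.symm e := by rw [symm_mul, htb, ha1]
    have he2 : (t * (t * σ)).symm e = σ.symm a := by rw [symm_mul, hte, hb1]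
    have huv : (σ.symm a).val ≠ (σ.symm b).val := by
      simp only [ne_eq, Fin.val_eq_val]; exact fun h => hab (σ.symm.injective h)
    have huw : (σ.symm a).val ≠ (σ.symm e).val := by
      simp only [ne_eq, Fin.val_eq_val]; exact fun h => hae (σ.symm.injective h)
    have hvw : (σ.symm b).val ≠ (σ.symm e).val := by
      simp only [ne_eq, Fin.val_eq_val]; exact fun h => hbe (σ.symm.injective h)
    simp only [hf, zab_val, ha1, hb1, he1, ha2, hb2, he2]
    exact g3 _ _ _ huv huw hvw
  have e1 : ∑ σ : Run m, f (t * σ) = ∑ σ : Run m, f σ := sum_shift t f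
  have e2 : ∑ σ : Run m, f (t * (t * σ)) = ∑ σ : Run m, f (t * σ) :=
    sum_shift t (fun σ => f (t * σ))
  have e3 : ∑ σ : Run m, (f σ + f (t * σ) + f (t * (t * σ))) = (m.factorial : ℝ) := by
    rw [Finset.sum_congr rfl (fun σ _ => key σ)]
    simp [Fintype.card_perm]
  rw [Finset.sum_add_distrib, Finset.sum_add_distrib, e1, e2, e1] at e3
  have : S m a b a e = ∑ σ : Run m, f σ := rfl
  rw [this]; linarith

lemma S_swap_left {a b : Fin m} (h : a ≠ b) (c d : Fin m) : S m b a c d = - S m a b c d := by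
  unfold S
  rw [← Finset.sum_neg_distrib]
  exact Finset.sum_congr rfl fun σ _ => by rw [zab_swap σ h]; ring

noncomputable def W (m : ℕ) (a b c d : Fin m) : ℝ :=
  if c = d then 0 else if (c = a ∧ d = b) ∨ (c = b ∧ d = a) then 1
  else if c = a ∨ c = b ∨ d = a ∨ d = b then 1/9 else 0

lemma S_sq_eq (a b c d : Fin m) (hab : a ≠ b) :
    (S m a b c d)^2 = (m.factorial : ℝ)^2 * W m a b c d := by
  by_cases hcd : c = d
  · rw [hcd, S_right_diag d hab]
    simp [W, hcd]
  by_cases hca : c = a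
  · by_cases hdb : d = b
    · have hW : W m a b c d = 1 := by simp [W, hca, hdb, hcd, hab]
      rw [hW, hca, hdb, S_self, mul_one]
    · have hda : d ≠ a := fun h => hcd (hca.trans h.symm)
      have hW : W m a b c d = 1/9 := by simp [W, hca, hdb, hcd, hab, hda, hda.symm]
      rw [hW, hca, S_share hab hda.symm (fun h => hdb h.symm)]
      ring
  by_cases hcb : c = b
  · by_cases hda : d = a
    · have hW : W m a b c d = 1 := by simp [W, hcb, hda, hcd, hca, hab.symm]
      rw [hW, hcb, hda, S_antisymm_pair hab, mul_one]
      ring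
    · have hdb : d ≠ b := fun h => hcd (hcb.trans h.symm)
      have hW : W m a b c d = 1/9 := by simp [W, hcb, hda, hcd, hca, hdb, hdb.symm]
      have h1 : S m a b c d = - S m b a c d := by rw [S_swap_left hab, neg_neg]
      rw [hW, h1, hcb, S_share (Ne.symm hab) (Ne.symm hdb) (Ne.symm hda)]
      ring
  by_cases hda : d = a
  · have hW : W m a b c d = 1/9 := by simp [W, hca, hcb, hcd, hda]
    have h1 : S m a b c d = -S m a b d c :=
      S_swap_right a b (show d ≠ c from fun h => hcd h.symm)
    rw [hW, h1, hda, S_share hab (Ne.symm hca) (Ne.symm hcb)]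
    ring
  by_cases hdb : d = b
  · have hW : W m a b c d = 1/9 := by simp [W, hca, hcb, hcd, hda, hdb]
    have h1 : S m a b c d = S m b a d c := by
      rw [S_swap_right b a hcd, S_swap_left hab, neg_neg]
    rw [hW, h1, hdb, S_share (Ne.symm hab) (Ne.symm hcb) (Ne.symm hca)]
    ring
  · rw [S_disjoint hab hca hcb hda hdb]
    simp [W, hca, hcb, hcd, hda, hdb]

lemma sum_ind (x : Fin m) (r : ℝ) : ∑ d : Fin m, (if d = x then r else 0) = r := by
  simp [Finset.sum_ite_eq']

lemma sum_W_d {a b : Fin m} (c : Fin m) (hab : a ≠ b) :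
    ∑ d : Fin m, W m a b c d = if c = a ∨ c = b then ((m:ℝ)+7)/9 else 2/9 := by
  by_cases hca : c = a
  · have hpt : ∀ d, W m a b c d
        = 1/9 + (if d = a then -(1/9) else 0) + (if d = b then 8/9 else 0) := by
      intro d
      by_cases hda : d = a
      · simp [W, hca, hda, hab]
      · by_cases hdb : d = b
        · simp [W, hca, hda, hdb, hab, Ne.symm hab]
          norm_num
        · simp [W, hca, hda, hdb, fun h : d = a => hda h]
          intro h; exact absurd h.symm hda
    rw [Finset.sum_congr rfl (fun d _ => hpt d), Finset.sum_add_distrib,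
      Finset.sum_add_distrib, sum_ind, sum_ind, Finset.sum_const, if_pos (Or.inl hca)]
    simp [Finset.card_univ]
    ring
  · by_cases hcb : c = b
    · have hpt : ∀ d, W m a b c d
          = 1/9 + (if d = b then -(1/9) else 0) + (if d = a then 8/9 else 0) := by
        intro d
        by_cases hdb : d = b
        · simp [W, hcb, hdb, hab, Ne.symm hab]
        · by_cases hda : d = a
          · simp [W, hcb, hda, hdb, hab, Ne.symm hab]
            norm_num
          · simp [W, hcb, hda, hdb]
            intro h; exact absurd h.symm hdb
      rw [Finset.sum_congr rfl (fun d _ => hpt d), Finset.sum_add_distrib,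
        Finset.sum_add_distrib, sum_ind, sum_ind, Finset.sum_const, if_pos (Or.inr hcb)]
      simp [Finset.card_univ]
      ring
    · have hpt : ∀ d, W m a b c d
          = (if d = a then 1/9 else 0) + (if d = b then 1/9 else 0) := by
        intro d
        by_cases hda : d = a
        · simp [W, hca, hcb, hda, hab]
        · by_cases hdb : d = b
          · simp [W, hca, hcb, hda, hdb, Ne.symm hab]
          · by_cases hcd : c = d
            · simp [W, hcd, hda, hdb]
            · simp [W, hca, hcb, hda, hdb, hcd]
      rw [Finset.sum_congr rfl (fun d _ => hpt d), Finset.sum_add_distrib, sum_ind, sum_ind,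
        if_neg (by simp [hca, hcb])]
      norm_num

lemma sum_W {a b : Fin m} (hab : a ≠ b) :
    ∑ c : Fin m, ∑ d : Fin m, W m a b c d = (4*(m:ℝ)+10)/9 := by
  have hpt : ∀ c, (∑ d : Fin m, W m a b c d)
      = 2/9 + (if c = a then ((m:ℝ)+5)/9 else 0) + (if c = b then ((m:ℝ)+5)/9 else 0) := by
    intro c
    rw [sum_W_d c hab]
    by_cases hca : c = a
    · rw [if_pos (Or.inl hca), if_pos hca, if_neg (hca ▸ hab)]
      ring
    · by_cases hcb : c = b
      · rw [if_pos (Or.inr hcb), if_neg hca, if_pos hcb]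
        ring
      · rw [if_neg (by simp [hca, hcb]), if_neg hca, if_neg hcb]
        norm_num
  rw [Finset.sum_congr rfl (fun c _ => hpt c), Finset.sum_add_distrib, Finset.sum_add_distrib,
    sum_ind, sum_ind, Finset.sum_const]
  simp [Finset.card_univ]
  ring

lemma sum_S_sq {a b : Fin m} (hab : a ≠ b) :
    ∑ c : Fin m, ∑ d : Fin m, (S m a b c d)^2
      = (m.factorial : ℝ)^2 * ((4*(m:ℝ)+10)/9) := by
  have : ∀ c d : Fin m, (S m a b c d)^2 = (m.factorial : ℝ)^2 * W m a b c d :=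
    fun c d => S_sq_eq a b c d hab
  simp_rw [this, ← Finset.mul_sum]
  rw [sum_W hab]

lemma S_left_diag (a : Fin m) {c d : Fin m} (h : c ≠ d) : S m a a c d = 0 := by
  rw [S_comm, S_right_diag _ h]

lemma half_sum (F : Fin m × Fin m → ℝ) (hsymm : ∀ c d : Fin m, F (c, d) = F (d, c))
    (hdiag : ∀ c : Fin m, F (c, c) = 0) :
    ∑ q : {p : Fin m × Fin m // p.1 < p.2}, F q.val = (∑ p : Fin m × Fin m, F p) / 2 := by
  classical
  have h1 : ∑ q : {p : Fin m × Fin m // p.1 < p.2}, F q.val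
      = ∑ p ∈ Finset.univ.filter (fun p : Fin m × Fin m => p.1 < p.2), F p :=
    (Finset.sum_subtype _ (by simp) F).symm
  have hsplit : ∑ p : Fin m × Fin m, F p
      = ∑ p ∈ Finset.univ.filter (fun p : Fin m × Fin m => p.1 < p.2), F p
        + ∑ p ∈ Finset.univ.filter (fun p : Fin m × Fin m => ¬ p.1 < p.2), F p :=
    (Finset.sum_filter_add_sum_filter_not _ _ F).symm
  have h2 : ∑ p ∈ Finset.univ.filter (fun p : Fin m × Fin m => ¬ p.1 < p.2), F p
      = ∑ p ∈ Finset.univ.filter (fun p : Fin m × Fin m => p.2 < p.1), F p := by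
    refine (Finset.sum_subset ?_ ?_).symm
    · intro x hx
      simp only [Finset.mem_filter, Finset.mem_univ, true_and] at hx ⊢
      exact not_lt.mpr hx.le
    · intro x hx hx'
      simp only [Finset.mem_filter, Finset.mem_univ, true_and] at hx hx'
      have hx2 : x.2 = x.1 := le_antisymm (not_lt.mp hx) (not_lt.mp hx')
      have hxx : x = (x.1, x.1) := Prod.ext rfl hx2
      rw [hxx]
      exact hdiag x.1
  have h3 : ∑ p ∈ Finset.univ.filter (fun p : Fin m × Fin m => p.2 < p.1), F p
      = ∑ p ∈ Finset.univ.filter (fun p : Fin m × Fin m => p.1 < p.2), F p := by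
    refine Finset.sum_nbij' (fun p => Prod.swap p) (fun p => Prod.swap p) ?_ ?_ ?_ ?_ ?_
    · intro p hp; simp only [Finset.mem_filter, Finset.mem_univ, true_and] at hp ⊢; exact hp
    · intro p hp; simp only [Finset.mem_filter, Finset.mem_univ, true_and] at hp ⊢; exact hp
    · intro p _; simp
    · intro p _; simp
    · intro p _; exact hsymm p.1 p.2
  rw [h1]
  rw [h2, h3] at hsplit
  linarith

lemma inner_sum' {a b : Fin m} (hab : a ≠ b) :
    ∑ q : {p : Fin m × Fin m // p.1 < p.2}, (S m a b q.1.1 q.1.2)^2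
      = (m.factorial : ℝ)^2 * ((4*(m:ℝ)+10)/9) / 2 := by
  have h := half_sum (fun cd => (S m a b cd.1 cd.2)^2) ?_ ?_
  · rw [h, Fintype.sum_prod_type, sum_S_sq hab]
  · intro c d
    by_cases hcd : c = d
    · rw [hcd]
    · simp only
      rw [S_swap_right a b hcd]
      ring
  · intro c
    simp only [S_right_diag c hab]
    norm_num

lemma double_sum :
    ∑ p : {p : Fin m × Fin m // p.1 < p.2}, ∑ q : {p : Fin m × Fin m // p.1 < p.2},
        (S m p.1.1 p.1.2 q.1.1 q.1.2)^2
      = (m:ℝ) * ((m:ℝ) - 1) * ((m.factorial : ℝ)^2 * ((4*(m:ℝ)+10)/9)) / 4 := by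
  set K : ℝ := (m.factorial : ℝ)^2 * ((4*(m:ℝ)+10)/9) / 2 with hK
  have h := half_sum
    (fun cd => ∑ q : {p : Fin m × Fin m // p.1 < p.2}, (S m cd.1 cd.2 q.1.1 q.1.2)^2) ?_ ?_
  · rw [h, Fintype.sum_prod_type]
    have hpt : ∀ a b : Fin m,
        (∑ q : {p : Fin m × Fin m // p.1 < p.2}, (S m a b q.1.1 q.1.2)^2)
          = K - (if b = a then K else 0) := by
      intro a b
      by_cases hab : a = b
      · rw [if_pos hab.symm]
        have : ∀ q : {p : Fin m × Fin m // p.1 < p.2}, (S m a b q.1.1 q.1.2)^2 = 0 := by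
          intro q
          rw [hab, S_left_diag b (ne_of_lt q.2)]
          norm_num
        simp [this]
      · rw [if_neg (fun h => hab h.symm), inner_sum' hab, hK]
        ring
    simp_rw [hpt]
    have hin : ∀ a : Fin m, ∑ b : Fin m, (K - (if b = a then K else 0)) = (m:ℝ)*K - K := by
      intro a
      rw [Finset.sum_sub_distrib, sum_ind, Finset.sum_const, Finset.card_univ, Fintype.card_fin]
      simp [nsmul_eq_mul]
    simp_rw [hin]
    rw [Finset.sum_const, Finset.card_univ, Fintype.card_fin, hK, nsmul_eq_mul]
    ring
  · intro c d
    by_cases hcd : c = d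
    · rw [hcd]
    · simp only
      apply Finset.sum_congr rfl
      intro q _
      rw [S_swap_left hcd]
      ring
  · intro c
    simp only
    apply Finset.sum_eq_zero
    intro q _
    rw [S_left_diag c (ne_of_lt q.2)]
    norm_num


open Matrix in
theorem stmt3 {m : ℕ} (hm : 2 ≤ m) :
    Matrix.trace ((pwoX (fun σ : Run m => σ))ᵀ * pwoX (fun σ : Run m => σ) *
        ((pwoX (fun σ : Run m => σ))ᵀ * pwoX (fun σ : Run m => σ))) /
        ((Nat.factorial m : ℝ)) ^ 2 =
      (2 * (m : ℝ) ^ 3 + 3 * (m : ℝ) ^ 2 - 5 * (m : ℝ) + 18) / 18 := by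
  classical
  set M := (pwoX (fun σ : Run m => σ))ᵀ * pwoX (fun σ : Run m => σ) with hM
  have hMe : ∀ c d, M c d = ∑ σ : Run m, pwoX (fun σ : Run m => σ) σ c
      * pwoX (fun σ : Run m => σ) σ d := by
    intro c d
    rw [hM, Matrix.mul_apply]
    simp [Matrix.transpose_apply]
  have hnn : M none none = (m.factorial : ℝ) := by
    rw [hMe]
    simp [pwoX, Fintype.card_perm]
  have hns : ∀ q : {p : Fin m × Fin m // p.1 < p.2}, M none (some q) = 0 := by
    intro q
    rw [hMe]
    simp only [pwoX, one_mul]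
    exact sum_zab_eq_zero (ne_of_lt q.2)
  have hsn : ∀ q : {p : Fin m × Fin m // p.1 < p.2}, M (some q) none = 0 := by
    intro q
    rw [hMe]
    simp only [pwoX, mul_one]
    exact sum_zab_eq_zero (ne_of_lt q.2)
  have hss : ∀ p q : {p : Fin m × Fin m // p.1 < p.2},
      M (some p) (some q) = S m p.1.1 p.1.2 q.1.1 q.1.2 := by
    intro p q
    rw [hMe]
    rfl
  have htr : Matrix.trace (M * M) = ∑ c, ∑ d, M c d * M d c := by
    simp [Matrix.trace, Matrix.diag, Matrix.mul_apply]
  have h1 : ∑ d, M none d * M d none = (m.factorial : ℝ)^2 := by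
    rw [Fintype.sum_option, hnn]
    simp only [hns, hsn, mul_zero, zero_mul]
    simp [sq]
  have h2 : ∀ p : {p : Fin m × Fin m // p.1 < p.2},
      ∑ d, M (some p) d * M d (some p)
        = ∑ q : {p : Fin m × Fin m // p.1 < p.2}, S m p.1.1 p.1.2 q.1.1 q.1.2 ^ 2 := by
    intro p
    rw [Fintype.sum_option, hsn p, hns p, zero_mul, zero_add]
    apply Finset.sum_congr rfl
    intro q _
    rw [hss, hss, S_comm q.1.1 q.1.2, sq]
  have htr2 : Matrix.trace (M * M)
      = (m.factorial : ℝ)^2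
        + (m:ℝ) * ((m:ℝ) - 1) * ((m.factorial : ℝ)^2 * ((4*(m:ℝ)+10)/9)) / 4 := by
    rw [htr, Fintype.sum_option, h1]
    rw [Finset.sum_congr rfl (fun p _ => h2 p), double_sum]
  rw [htr2]
  have hfac : (m.factorial : ℝ) ≠ 0 := Nat.cast_ne_zero.mpr (Nat.factorial_ne_zero m)
  field_simp
  ring
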